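/- Let G = (V,E) be a finite undirected graph with V ⊆ ℕ and let p : E → [0,1], with the random orientation model as above. For any nonempty set S ⊆ V and any two vertices a, b ∈ V, P(S → a and S → b) ≥ P(S → a) · P(S → b), where S → x denotes the event that some vertex of S has a directed path to x in the random orientation. -/

import Mathlib

open Classical Finset

set_option linter.unusedSectionVars false

noncomputable section

variable {V : Type*} [Fintype V] [LinearOrder V]

/-- An orientation of the edges of `G`: `true` on edge `e = {u,v}` (with `u < v`)
means the edge is oriented from `u` to `v` (min to max). -/
def Orient (G : SimpleGraph V) : Type _ := ↥G.edgeFinset → Bool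

instance (G : SimpleGraph V) : Fintype (Orient G) := by unfold Orient; infer_instance

/-- The edge `{u,v}` exists and is oriented from `u` to `v` in `ω`. -/
def step (G : SimpleGraph V) (ω : Orient G) (u v : V) : Prop :=
  ∃ h : G.Adj u v,
    ω ⟨s(u, v), SimpleGraph.mem_edgeFinset.mpr ((SimpleGraph.mem_edgeSet G).mpr h)⟩ = decide (u < v)

/-- There is a directed path from `x` to `y` in the orientation `ω`. -/
def reaches (G : SimpleGraph V) (ω : Orient G) (x y : V) : Prop :=
  Relation.ReflTransGen (step G ω) x y

/-- The probability of the orientation `ω` under independent `p`-biased coin flips. -/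
def wt (G : SimpleGraph V) (p : Sym2 V → ℝ) (ω : Orient G) : ℝ :=
  ∏ e : G.edgeFinset, if ω e then p e else 1 - p e

/-- Probability of an event under the `p`-biased random orientation measure. -/
def Pr (G : SimpleGraph V) (p : Sym2 V → ℝ) (A : Set (Orient G)) : ℝ :=
  ∑ ω : Orient G, A.indicator (wt G p) ω


-- ### Basic lemmas about `wt` and `Pr`

lemma wt_nonneg {G : SimpleGraph V} {p : Sym2 V → ℝ}
    (hp : ∀ e ∈ G.edgeSet, 0 ≤ p e ∧ p e ≤ 1) (ω : Orient G) : 0 ≤ wt G p ω := by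
  refine Finset.prod_nonneg fun e _ => ?_
  obtain ⟨h1, h2⟩ := hp e (SimpleGraph.mem_edgeFinset.mp e.2)
  split <;> linarith

lemma Pr_nonneg {G : SimpleGraph V} {p : Sym2 V → ℝ}
    (hp : ∀ e ∈ G.edgeSet, 0 ≤ p e ∧ p e ≤ 1) (A : Set (Orient G)) : 0 ≤ Pr G p A :=
  Finset.sum_nonneg fun ω _ => Set.indicator_nonneg (fun ω _ => wt_nonneg hp ω) ω

lemma Pr_mono {G : SimpleGraph V} {p : Sym2 V → ℝ}
    (hp : ∀ e ∈ G.edgeSet, 0 ≤ p e ∧ p e ≤ 1) {A B : Set (Orient G)} (h : A ⊆ B) :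
    Pr G p A ≤ Pr G p B :=
  Finset.sum_le_sum fun ω _ =>
    Set.indicator_le_indicator_of_subset h (fun ω => wt_nonneg hp ω) ω

lemma Pr_empty {G : SimpleGraph V} {p : Sym2 V → ℝ} : Pr G p ∅ = 0 := by
  simp [Pr]

lemma Pr_univ {G : SimpleGraph V} {p : Sym2 V → ℝ} : Pr G p Set.univ = 1 := by
  have h1 : Pr G p Set.univ
      = ∑ ω : (↥G.edgeFinset → Bool), ∏ e : G.edgeFinset, (if ω e then p e else 1 - p e) := by
    unfold Pr
    rw [Set.indicator_univ]
    exact Fintype.sum_equiv (Equiv.refl _) _ _ fun ω => rfl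
  have h2 := Fintype.prod_sum (ι := ↥G.edgeFinset) (κ := fun _ => Bool)
      (fun e b => if b then p e else 1 - p e)
  rw [h1, ← h2]
  refine Finset.prod_eq_one fun e _ => ?_
  rw [Fintype.sum_bool]
  simp

set_option linter.unusedSectionVars false

attribute [-instance] SimpleGraph.instDecidableRelAdjDeleteEdgesOfDecidablePredSym2MemSetOfDecidableEq

-- ### Deleting one edge

lemma mem_delete_iff (G : SimpleGraph V) (e₀ : Sym2 V) (f : Sym2 V) :
    f ∈ (G.deleteEdges {e₀}).edgeFinset ↔ f ∈ G.edgeFinset ∧ f ≠ e₀ := by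
  simp [SimpleGraph.mem_edgeFinset, SimpleGraph.edgeSet_deleteEdges]

def restr (G : SimpleGraph V) (e₀ : Sym2 V) (ω : Orient G) : Orient (G.deleteEdges {e₀}) :=
  fun f => ω ⟨f.1, ((mem_delete_iff G e₀ f.1).1 f.2).1⟩

def extb (G : SimpleGraph V) (e₀ : Sym2 V) (b : Bool) (ω' : Orient (G.deleteEdges {e₀})) :
    Orient G :=
  fun f => if h : f.1 = e₀ then b else ω' ⟨f.1, (mem_delete_iff G e₀ f.1).2 ⟨f.2, h⟩⟩

lemma restr_extb (G : SimpleGraph V) (e₀ : Sym2 V) (b : Bool)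
    (ω' : Orient (G.deleteEdges {e₀})) : restr G e₀ (extb G e₀ b ω') = ω' := by
  funext f
  exact dif_neg ((mem_delete_iff G e₀ f.1).1 f.2).2

lemma extb_apply_self (G : SimpleGraph V) (e₀ : Sym2 V) (he₀ : e₀ ∈ G.edgeFinset) (b : Bool)
    (ω' : Orient (G.deleteEdges {e₀})) : extb G e₀ b ω' ⟨e₀, he₀⟩ = b := dif_pos rfl

def orientEquiv (G : SimpleGraph V) (e₀ : Sym2 V) (he₀ : e₀ ∈ G.edgeFinset) :
    Bool × Orient (G.deleteEdges {e₀}) ≃ Orient G where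
  toFun x := extb G e₀ x.1 x.2
  invFun ω := (ω ⟨e₀, he₀⟩, restr G e₀ ω)
  left_inv := by
    rintro ⟨b, ω'⟩
    rw [Prod.ext_iff]
    exact ⟨extb_apply_self G e₀ he₀ b ω', restr_extb G e₀ b ω'⟩
  right_inv := by
    intro ω
    funext f
    by_cases h : f.1 = e₀
    · have hf : f = ⟨e₀, he₀⟩ := Subtype.ext h
      rw [hf]
      exact dif_pos rfl
    · exact dif_neg h

def gfun (G : SimpleGraph V) (p : Sym2 V → ℝ) (ω : Orient G) : Sym2 V → ℝ :=
  fun f => if h : f ∈ G.edgeFinset then (if ω ⟨f, h⟩ then p f else 1 - p f) else 1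

lemma wt_eq_prod (G : SimpleGraph V) (p : Sym2 V → ℝ) (ω : Orient G) :
    wt G p ω = ∏ f ∈ G.edgeFinset, gfun G p ω f := by
  unfold wt
  rw [Finset.univ_eq_attach, ← Finset.prod_attach G.edgeFinset (gfun G p ω)]
  refine Finset.prod_congr rfl fun f _ => ?_
  simp only [gfun]
  rw [dif_pos f.2]

lemma edgeFinset_delete (G : SimpleGraph V) (e₀ : Sym2 V) :
    (G.deleteEdges {e₀}).edgeFinset = G.edgeFinset.erase e₀ := by
  ext f
  rw [Finset.mem_erase, mem_delete_iff]
  tauto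

lemma wt_extb (G : SimpleGraph V) (p : Sym2 V → ℝ) (e₀ : Sym2 V) (he₀ : e₀ ∈ G.edgeFinset)
    (b : Bool) (ω' : Orient (G.deleteEdges {e₀})) :
    wt G p (extb G e₀ b ω') = (if b then p e₀ else 1 - p e₀) * wt (G.deleteEdges {e₀}) p ω' := by
  rw [wt_eq_prod, wt_eq_prod, ← Finset.mul_prod_erase _ _ he₀]
  congr 1
  · have h1 : gfun G p (extb G e₀ b ω') e₀
        = if (extb G e₀ b ω' ⟨e₀, he₀⟩) then p e₀ else 1 - p e₀ := dif_pos he₀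
    rw [h1, extb_apply_self G e₀ he₀]
  · rw [edgeFinset_delete]
    refine Finset.prod_congr rfl fun f hf => ?_
    obtain ⟨hne, hfE⟩ := Finset.mem_erase.1 hf
    have hfd : f ∈ (G.deleteEdges {e₀}).edgeFinset := (mem_delete_iff G e₀ f).2 ⟨hfE, hne⟩
    have h2 : gfun G p (extb G e₀ b ω') f
        = if (extb G e₀ b ω' ⟨f, hfE⟩) then p f else 1 - p f := dif_pos hfE
    have h3 : gfun (G.deleteEdges {e₀}) p ω' f
        = if (ω' ⟨f, hfd⟩) then p f else 1 - p f := dif_pos hfd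
    have h4 : extb G e₀ b ω' ⟨f, hfE⟩ = ω' ⟨f, hfd⟩ := dif_neg hne
    rw [h2, h3, h4]

lemma Pr_split (G : SimpleGraph V) (p : Sym2 V → ℝ) (e₀ : Sym2 V) (he₀ : e₀ ∈ G.edgeFinset)
    (A : Set (Orient G)) (B C : Set (Orient (G.deleteEdges {e₀})))
    (hB : ∀ ω', (extb G e₀ true ω' ∈ A ↔ ω' ∈ B))
    (hC : ∀ ω', (extb G e₀ false ω' ∈ A ↔ ω' ∈ C)) :
    Pr G p A = p e₀ * Pr (G.deleteEdges {e₀}) p B + (1 - p e₀) * Pr (G.deleteEdges {e₀}) p C := by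
  have h0 : Pr G p A = ∑ x : Bool × Orient (G.deleteEdges {e₀}),
      A.indicator (wt G p) (extb G e₀ x.1 x.2) := by
    unfold Pr
    exact (Equiv.sum_comp (orientEquiv G e₀ he₀) (A.indicator (wt G p))).symm
  rw [h0, Fintype.sum_prod_type, Fintype.sum_bool]
  have hT : ∀ ω', A.indicator (wt G p) (extb G e₀ true ω')
      = p e₀ * B.indicator (wt (G.deleteEdges {e₀}) p) ω' := by
    intro ω'
    by_cases h : ω' ∈ B
    · rw [Set.indicator_of_mem ((hB ω').2 h), Set.indicator_of_mem h,
        wt_extb G p e₀ he₀]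
      simp
    · rw [Set.indicator_of_notMem (fun hh => h ((hB ω').1 hh)),
        Set.indicator_of_notMem h, mul_zero]
  have hF : ∀ ω', A.indicator (wt G p) (extb G e₀ false ω')
      = (1 - p e₀) * C.indicator (wt (G.deleteEdges {e₀}) p) ω' := by
    intro ω'
    by_cases h : ω' ∈ C
    · rw [Set.indicator_of_mem ((hC ω').2 h), Set.indicator_of_mem h,
        wt_extb G p e₀ he₀]
      simp
    · rw [Set.indicator_of_notMem (fun hh => h ((hC ω').1 hh)),
        Set.indicator_of_notMem h, mul_zero]
  simp only [hT, hF]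
  rw [← Finset.mul_sum, ← Finset.mul_sum]
  rfl

lemma Pr_split_bool (G : SimpleGraph V) (p : Sym2 V → ℝ) (e₀ : Sym2 V)
    (he₀ : e₀ ∈ G.edgeFinset) (b₀ : Bool) (A : Set (Orient G))
    (B C : Set (Orient (G.deleteEdges {e₀})))
    (hB : ∀ ω', (extb G e₀ b₀ ω' ∈ A ↔ ω' ∈ B))
    (hC : ∀ ω', (extb G e₀ (!b₀) ω' ∈ A ↔ ω' ∈ C)) :
    Pr G p A = (if b₀ then p e₀ else 1 - p e₀) * Pr (G.deleteEdges {e₀}) p B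
        + (if b₀ then 1 - p e₀ else p e₀) * Pr (G.deleteEdges {e₀}) p C := by
  cases b₀
  · have := Pr_split G p e₀ he₀ A C B (by simpa using hC) hB
    simp only [Bool.false_eq_true, if_false]
    rw [this]
    ring
  · have := Pr_split G p e₀ he₀ A B C hB (by simpa using hC)
    simpa using this

-- ### Reachability under edge deletion

lemma step_of_restr {G : SimpleGraph V} {e₀ : Sym2 V} {ω : Orient G} {x y : V}
    (h : step (G.deleteEdges {e₀}) (restr G e₀ ω) x y) : step G ω x y := by
  obtain ⟨hadj, hval⟩ := h
  exact ⟨(SimpleGraph.deleteEdges_adj.1 hadj).1, hval⟩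

lemma reaches_of_restr {G : SimpleGraph V} {e₀ : Sym2 V} {ω : Orient G} {x y : V}
    (h : reaches (G.deleteEdges {e₀}) (restr G e₀ ω) x y) : reaches G ω x y :=
  Relation.ReflTransGen.mono (fun _ _ hs => step_of_restr hs) x y h

lemma step_cases {G : SimpleGraph V} {e₀ : Sym2 V} (he₀ : e₀ ∈ G.edgeFinset)
    {ω : Orient G} {c d x y : V} (hcd : c ≠ d) (he : e₀ = s(c, d))
    (hω : ω ⟨e₀, he₀⟩ = decide (c < d)) (h : step G ω x y) :
    step (G.deleteEdges {e₀}) (restr G e₀ ω) x y ∨ (x = c ∧ y = d) := by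
  obtain ⟨hadj, hval⟩ := h
  by_cases hfe : s(x, y) = e₀
  · right
    rw [he] at hfe
    rcases Sym2.eq_iff.mp hfe with ⟨hx, hy⟩ | ⟨hx, hy⟩
    · exact ⟨hx, hy⟩
    · exfalso
      have hmem : s(x, y) ∈ G.edgeFinset :=
        SimpleGraph.mem_edgeFinset.mpr ((SimpleGraph.mem_edgeSet G).mpr hadj)
      have hsub : (⟨e₀, he₀⟩ : ↥G.edgeFinset) = ⟨s(x, y), hmem⟩ := Subtype.ext (by
        show e₀ = s(x, y)
        rw [he, hx, hy]
        exact Sym2.eq_swap)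
      have heq : decide (c < d) = decide (x < y) := by
        rw [← hω, hsub]
        exact hval
      have hiff : (c < d) ↔ (x < y) := decide_eq_decide.mp heq
      rw [hx, hy] at hiff
      rcases hcd.lt_or_gt with h1 | h1
      · exact absurd (hiff.1 h1) (lt_asymm h1)
      · exact absurd (hiff.2 h1) (lt_asymm h1)
  · left
    exact ⟨SimpleGraph.deleteEdges_adj.2 ⟨hadj, by simp [hfe]⟩, hval⟩

lemma reaches_cases {G : SimpleGraph V} {e₀ : Sym2 V} (he₀ : e₀ ∈ G.edgeFinset)
    {ω : Orient G} {c d x y : V} (hcd : c ≠ d) (he : e₀ = s(c, d))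
    (hω : ω ⟨e₀, he₀⟩ = decide (c < d)) (h : reaches G ω x y) :
    reaches (G.deleteEdges {e₀}) (restr G e₀ ω) x y ∨
      reaches (G.deleteEdges {e₀}) (restr G e₀ ω) d y := by
  induction h using Relation.ReflTransGen.head_induction_on with
  | refl => exact Or.inl Relation.ReflTransGen.refl
  | head hstep _ ih =>
    rcases step_cases he₀ hcd he hω hstep with hs | ⟨rfl, rfl⟩
    · rcases ih with h1 | h1
      · exact Or.inl (Relation.ReflTransGen.head hs h1)
      · exact Or.inr h1
    · exact Or.inr (ih.elim id id)

-- ### The event identities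

lemma event_pos {G : SimpleGraph V} {u v : V} (huv : G.Adj u v)
    (he₀ : s(u, v) ∈ G.edgeFinset) (S : Finset V) (hu : u ∈ S) (x : V)
    (ω' : Orient (G.deleteEdges {s(u, v)})) :
    (∃ s ∈ S, reaches G (extb G s(u, v) (decide (u < v)) ω') s x) ↔
      ∃ s ∈ insert v S, reaches (G.deleteEdges {s(u, v)}) ω' s x := by
  have hrω : restr G s(u, v) (extb G s(u, v) (decide (u < v)) ω') = ω' :=
    restr_extb G s(u, v) _ _
  have hω : extb G s(u, v) (decide (u < v)) ω' ⟨s(u, v), he₀⟩ = decide (u < v) :=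
    extb_apply_self G s(u, v) he₀ _ _
  constructor
  · rintro ⟨s, hs, hr⟩
    rcases reaches_cases he₀ huv.ne rfl hω hr with h1 | h1
    · exact ⟨s, Finset.mem_insert_of_mem hs, hrω ▸ h1⟩
    · exact ⟨v, Finset.mem_insert_self v S, hrω ▸ h1⟩
  · rintro ⟨s, hs, hr⟩
    have hr' : reaches G (extb G s(u, v) (decide (u < v)) ω') s x :=
      reaches_of_restr (by rw [hrω]; exact hr)
    rcases Finset.mem_insert.1 hs with rfl | hs'
    · exact ⟨u, hu, Relation.ReflTransGen.head ⟨huv, hω⟩ hr'⟩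
    · exact ⟨s, hs', hr'⟩

lemma event_neg {G : SimpleGraph V} {u v : V} (huv : G.Adj u v)
    (he₀ : s(u, v) ∈ G.edgeFinset) (S : Finset V) (hu : u ∈ S) (x : V)
    (ω' : Orient (G.deleteEdges {s(u, v)})) :
    (∃ s ∈ S, reaches G (extb G s(u, v) (!decide (u < v)) ω') s x) ↔
      ∃ s ∈ S, reaches (G.deleteEdges {s(u, v)}) ω' s x := by
  have hrω : restr G s(u, v) (extb G s(u, v) (!decide (u < v)) ω') = ω' :=
    restr_extb G s(u, v) _ _
  have hω : extb G s(u, v) (!decide (u < v)) ω' ⟨s(u, v), he₀⟩ = decide (v < u) := by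
    rw [extb_apply_self G s(u, v) he₀]
    rcases huv.ne.lt_or_gt with h | h
    · simp [h, asymm h]
    · simp [h, asymm h]
  constructor
  · rintro ⟨s, hs, hr⟩
    rcases reaches_cases he₀ huv.ne' (Sym2.eq_swap) hω hr with h1 | h1
    · exact ⟨s, hs, hrω ▸ h1⟩
    · exact ⟨u, hu, hrω ▸ h1⟩
  · rintro ⟨s, hs, hr⟩
    exact ⟨s, hs, reaches_of_restr (by rw [hrω]; exact hr)⟩

-- ### Base case: no edge leaves `S`

lemma base_case (G : SimpleGraph V) (p : Sym2 V → ℝ) (S : Finset V)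
    (hcl : ∀ s ∈ S, ∀ t, G.Adj s t → t ∈ S) (a b : V) :
    Pr G p {ω | (∃ s ∈ S, reaches G ω s a) ∧ (∃ s ∈ S, reaches G ω s b)} ≥
      Pr G p {ω | ∃ s ∈ S, reaches G ω s a} * Pr G p {ω | ∃ s ∈ S, reaches G ω s b} := by
  have hreach : ∀ (ω : Orient G) (x : V), (∃ s ∈ S, reaches G ω s x) ↔ x ∈ S := by
    intro ω x
    constructor
    · rintro ⟨s, hs, hr⟩
      induction hr with
      | refl => exact hs
      | tail _ hstep ih =>
        obtain ⟨hadj, -⟩ := hstep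
        exact hcl _ ih _ hadj
    · intro hx
      exact ⟨x, hx, Relation.ReflTransGen.refl⟩
  by_cases ha : a ∈ S <;> by_cases hb : b ∈ S
  · have h1 : {ω : Orient G | (∃ s ∈ S, reaches G ω s a) ∧ (∃ s ∈ S, reaches G ω s b)}
        = Set.univ := Set.eq_univ_of_forall fun ω => ⟨(hreach ω a).2 ha, (hreach ω b).2 hb⟩
    have h2 : {ω : Orient G | ∃ s ∈ S, reaches G ω s a} = Set.univ :=
      Set.eq_univ_of_forall fun ω => (hreach ω a).2 ha
    have h3 : {ω : Orient G | ∃ s ∈ S, reaches G ω s b} = Set.univ :=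
      Set.eq_univ_of_forall fun ω => (hreach ω b).2 hb
    rw [h1, h2, h3, Pr_univ]
    norm_num
  · have h1 : {ω : Orient G | (∃ s ∈ S, reaches G ω s a) ∧ (∃ s ∈ S, reaches G ω s b)}
        = ∅ := Set.eq_empty_iff_forall_notMem.2 fun ω h => hb ((hreach ω b).1 h.2)
    have h2 : {ω : Orient G | ∃ s ∈ S, reaches G ω s b} = ∅ :=
      Set.eq_empty_iff_forall_notMem.2 fun ω h => hb ((hreach ω b).1 h)
    rw [h1, h2, Pr_empty, mul_zero]
  · have h1 : {ω : Orient G | (∃ s ∈ S, reaches G ω s a) ∧ (∃ s ∈ S, reaches G ω s b)}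
        = ∅ := Set.eq_empty_iff_forall_notMem.2 fun ω h => ha ((hreach ω a).1 h.1)
    have h2 : {ω : Orient G | ∃ s ∈ S, reaches G ω s a} = ∅ :=
      Set.eq_empty_iff_forall_notMem.2 fun ω h => ha ((hreach ω a).1 h)
    rw [h1, h2, Pr_empty, zero_mul]
  · have h1 : {ω : Orient G | (∃ s ∈ S, reaches G ω s a) ∧ (∃ s ∈ S, reaches G ω s b)}
        = ∅ := Set.eq_empty_iff_forall_notMem.2 fun ω h => ha ((hreach ω a).1 h.1)
    have h2 : {ω : Orient G | ∃ s ∈ S, reaches G ω s a} = ∅ :=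
      Set.eq_empty_iff_forall_notMem.2 fun ω h => ha ((hreach ω a).1 h)
    rw [h1, h2, Pr_empty, zero_mul]

-- ### The main induction

lemma main_aux : ∀ (n : ℕ) (G : SimpleGraph V) (p : Sym2 V → ℝ),
    G.edgeFinset.card ≤ n → (∀ e ∈ G.edgeSet, 0 ≤ p e ∧ p e ≤ 1) →
    ∀ (S : Finset V) (a b : V),
    Pr G p {ω | (∃ s ∈ S, reaches G ω s a) ∧ (∃ s ∈ S, reaches G ω s b)} ≥
      Pr G p {ω | ∃ s ∈ S, reaches G ω s a} * Pr G p {ω | ∃ s ∈ S, reaches G ω s b} := by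
  intro n
  induction n with
  | zero =>
    intro G p hcard hp S a b
    refine base_case G p S (fun s hs t hadj => ?_) a b
    exfalso
    have hmem : s(s, t) ∈ G.edgeFinset :=
      SimpleGraph.mem_edgeFinset.mpr ((SimpleGraph.mem_edgeSet G).mpr hadj)
    rw [Finset.card_eq_zero.1 (Nat.le_zero.1 hcard)] at hmem
    exact Finset.notMem_empty _ hmem
  | succ n ih =>
    intro G p hcard hp S a b
    by_cases hbd : ∃ u t, u ∈ S ∧ t ∉ S ∧ G.Adj u t
    · obtain ⟨u, v, hu, hv, huv⟩ := hbd
      have he₀ : s(u, v) ∈ G.edgeFinset :=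
        SimpleGraph.mem_edgeFinset.mpr ((SimpleGraph.mem_edgeSet G).mpr huv)
      have hpd : ∀ e ∈ (G.deleteEdges {s(u, v)}).edgeSet, 0 ≤ p e ∧ p e ≤ 1 := by
        intro e hee
        rw [SimpleGraph.edgeSet_deleteEdges] at hee
        exact hp e hee.1
      have hcard' : (G.deleteEdges {s(u, v)}).edgeFinset.card ≤ n := by
        rw [edgeFinset_delete, Finset.card_erase_of_mem he₀]
        omega
      -- the three splitting identities
      have hsa := Pr_split_bool G p s(u, v) he₀ (decide (u < v))
          {ω | ∃ s ∈ S, reaches G ω s a}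
          {ω | ∃ s ∈ insert v S, reaches (G.deleteEdges {s(u, v)}) ω s a}
          {ω | ∃ s ∈ S, reaches (G.deleteEdges {s(u, v)}) ω s a}
          (fun ω' => event_pos huv he₀ S hu a ω')
          (fun ω' => event_neg huv he₀ S hu a ω')
      have hsb := Pr_split_bool G p s(u, v) he₀ (decide (u < v))
          {ω | ∃ s ∈ S, reaches G ω s b}
          {ω | ∃ s ∈ insert v S, reaches (G.deleteEdges {s(u, v)}) ω s b}
          {ω | ∃ s ∈ S, reaches (G.deleteEdges {s(u, v)}) ω s b}
          (fun ω' => event_pos huv he₀ S hu b ω')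
          (fun ω' => event_neg huv he₀ S hu b ω')
      have hsab := Pr_split_bool G p s(u, v) he₀ (decide (u < v))
          {ω | (∃ s ∈ S, reaches G ω s a) ∧ (∃ s ∈ S, reaches G ω s b)}
          {ω | (∃ s ∈ insert v S, reaches (G.deleteEdges {s(u, v)}) ω s a) ∧
               (∃ s ∈ insert v S, reaches (G.deleteEdges {s(u, v)}) ω s b)}
          {ω | (∃ s ∈ S, reaches (G.deleteEdges {s(u, v)}) ω s a) ∧
               (∃ s ∈ S, reaches (G.deleteEdges {s(u, v)}) ω s b)}
          (fun ω' => and_congr (event_pos huv he₀ S hu a ω') (event_pos huv he₀ S hu b ω'))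
          (fun ω' => and_congr (event_neg huv he₀ S hu a ω') (event_neg huv he₀ S hu b ω'))
      have hcoef : (if (decide (u < v) : Bool) then (1 : ℝ) - p s(u, v) else p s(u, v))
          = 1 - (if (decide (u < v) : Bool) then p s(u, v) else 1 - p s(u, v)) := by
        by_cases h : u < v <;> simp [h]
      rw [hcoef] at hsa hsb hsab
      set w : ℝ := if (decide (u < v) : Bool) then p s(u, v) else 1 - p s(u, v) with hw
      -- bounds on w
      obtain ⟨hp0, hp1⟩ := hp s(u, v) ((SimpleGraph.mem_edgeSet G).mpr huv)
      have hw0 : 0 ≤ w := by rw [hw]; split <;> linarith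
      have hw1 : w ≤ 1 := by rw [hw]; split <;> linarith
      -- induction hypotheses
      have ihT := ih (G.deleteEdges {s(u, v)}) p hcard' hpd (insert v S) a b
      have ihS := ih (G.deleteEdges {s(u, v)}) p hcard' hpd S a b
      -- monotonicity
      have hma : Pr (G.deleteEdges {s(u, v)}) p
            {ω | ∃ s ∈ S, reaches (G.deleteEdges {s(u, v)}) ω s a}
          ≤ Pr (G.deleteEdges {s(u, v)}) p
            {ω | ∃ s ∈ insert v S, reaches (G.deleteEdges {s(u, v)}) ω s a} :=
        Pr_mono hpd (fun ω h => by
          obtain ⟨s, hs, hr⟩ := h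
          exact ⟨s, Finset.mem_insert_of_mem hs, hr⟩)
      have hmb : Pr (G.deleteEdges {s(u, v)}) p
            {ω | ∃ s ∈ S, reaches (G.deleteEdges {s(u, v)}) ω s b}
          ≤ Pr (G.deleteEdges {s(u, v)}) p
            {ω | ∃ s ∈ insert v S, reaches (G.deleteEdges {s(u, v)}) ω s b} :=
        Pr_mono hpd (fun ω h => by
          obtain ⟨s, hs, hr⟩ := h
          exact ⟨s, Finset.mem_insert_of_mem hs, hr⟩)
      rw [ge_iff_le, hsa, hsb, hsab]
      nlinarith [mul_le_mul_of_nonneg_left ihT hw0,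
        mul_le_mul_of_nonneg_left ihS (by linarith : (0:ℝ) ≤ 1 - w),
        mul_nonneg (mul_nonneg hw0 (by linarith : (0:ℝ) ≤ 1 - w))
          (mul_nonneg (by linarith [hma] : (0:ℝ) ≤
              Pr (G.deleteEdges {s(u, v)}) p
                {ω | ∃ s ∈ insert v S, reaches (G.deleteEdges {s(u, v)}) ω s a}
              - Pr (G.deleteEdges {s(u, v)}) p
                {ω | ∃ s ∈ S, reaches (G.deleteEdges {s(u, v)}) ω s a})
            (by linarith [hmb] : (0:ℝ) ≤
              Pr (G.deleteEdges {s(u, v)}) p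
                {ω | ∃ s ∈ insert v S, reaches (G.deleteEdges {s(u, v)}) ω s b}
              - Pr (G.deleteEdges {s(u, v)}) p
                {ω | ∃ s ∈ S, reaches (G.deleteEdges {s(u, v)}) ω s b}))]
    · refine base_case G p S (fun s hs t hadj => ?_) a b
      by_contra ht
      exact hbd ⟨s, t, hs, ht, hadj⟩


/-- Set version: connection events from a common source set are positively
correlated in a `p`-biased random orientation. -/
theorem connections_positively_correlated_set (G : SimpleGraph V) (p : Sym2 V → ℝ)
    (hp : ∀ e ∈ G.edgeSet, 0 ≤ p e ∧ p e ≤ 1)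
    (S : Finset V) (hS : S.Nonempty) (a b : V) :
    Pr G p {ω | (∃ s ∈ S, reaches G ω s a) ∧ (∃ s ∈ S, reaches G ω s b)} ≥
      Pr G p {ω | ∃ s ∈ S, reaches G ω s a} *
        Pr G p {ω | ∃ s ∈ S, reaches G ω s b} := by
  exact main_aux G.edgeFinset.card G p le_rfl hp S a b
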